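/- Let ((c̄,b̄),x̄) be in the graph of the argmin mapping S, let D ∈ M_{c̄,b̄}(x̄), and assume that the matrix M_D is nonsingular. Then there exists a neighborhood V of (c̄, b̄_D) in ℝ^n × ℝ^D such that for every (c,β) ∈ V the set S_D(c,β) is the singleton {(I_n | 0_{n×|D|}) M_D^{−1} (−c; β)}, where (−c; β) denotes the column vector in ℝ^{n+|D|} stacking −c over β. In particular, S_D is strongly Lipschitz stable, and hence has the Aubin property, at ((c̄,b̄_D),x̄). -/

import Mathlib

open Matrix Set Topology Filter
open scoped ENNReal

namespace QPLip

variable {n m : ℕ}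

/-- The quadratic objective function `(1/2) xᵀQx + cᵀx`. -/
noncomputable def obj (Q : Matrix (Fin n) (Fin n) ℝ) (c x : Fin n → ℝ) : ℝ :=
  (1 / 2) * (x ⬝ᵥ Q.mulVec x) + c ⬝ᵥ x

/-- The feasible set `F(b) = {x : aᵢ'x ≤ bᵢ, i = 1,…,m}`. -/
def Feas (A : Matrix (Fin m) (Fin n) ℝ) (b : Fin m → ℝ) : Set (Fin n → ℝ) :=
  {x | ∀ i, A i ⬝ᵥ x ≤ b i}

/-- The argmin (optimal set) mapping `S(c,b)`. -/
noncomputable def argminSet (Q : Matrix (Fin n) (Fin n) ℝ) (A : Matrix (Fin m) (Fin n) ℝ)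
    (c : Fin n → ℝ) (b : Fin m → ℝ) : Set (Fin n → ℝ) :=
  {x | x ∈ Feas A b ∧ ∀ y ∈ Feas A b, obj Q c x ≤ obj Q c y}

/-- The active index set `I_b(x)`. -/
def activeIdx (A : Matrix (Fin m) (Fin n) ℝ) (b : Fin m → ℝ) (x : Fin n → ℝ) : Set (Fin m) :=
  {i | A i ⬝ᵥ x = b i}

/-- Conical convex hull of `{aᵢ : i ∈ D}` (equal to `{0}` when `D = ∅`). -/
def coneOf (A : Matrix (Fin m) (Fin n) ℝ) (D : Finset (Fin m)) : Set (Fin n → ℝ) :=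
  {v | ∃ lam : Fin m → ℝ, (∀ i, 0 ≤ lam i) ∧ v = ∑ i ∈ D, lam i • A i}

/-- The family `M_{c,b}(x)` of minimal KKT sets of indices at `((c,b),x)`. -/
def MinKKT (Q : Matrix (Fin n) (Fin n) ℝ) (A : Matrix (Fin m) (Fin n) ℝ)
    (c : Fin n → ℝ) (b : Fin m → ℝ) (x : Fin n → ℝ) : Set (Finset (Fin m)) :=
  {D | ↑D ⊆ activeIdx A b x ∧ -(Q.mulVec x + c) ∈ coneOf A D ∧
    ∀ D' : Finset (Fin m), D' ⊂ D → -(Q.mulVec x + c) ∉ coneOf A D'}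

/-- The extended family `L_{c,b}(x)` of KKT subsets of indices. -/
def ExtKKT (Q : Matrix (Fin n) (Fin n) ℝ) (A : Matrix (Fin m) (Fin n) ℝ)
    (c : Fin n → ℝ) (b : Fin m → ℝ) (x : Fin n → ℝ) : Set (Finset (Fin m)) :=
  {D | ↑D ⊆ activeIdx A b x ∧ LinearIndependent ℝ (fun i : D => A i.1) ∧
    -(Q.mulVec x + c) ∈ coneOf A D}

/-- Slater constraint qualification at `b`. -/
def Slater (A : Matrix (Fin m) (Fin n) ℝ) (b : Fin m → ℝ) : Prop :=
  ∃ y : Fin n → ℝ, ∀ i, A i ⬝ᵥ y < b i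

/-- The Nürnberger condition at `((c,b),x)`. -/
def NCond (Q : Matrix (Fin n) (Fin n) ℝ) (A : Matrix (Fin m) (Fin n) ℝ)
    (c : Fin n → ℝ) (b : Fin m → ℝ) (x : Fin n → ℝ) : Prop :=
  Slater A b ∧ ∀ D : Finset (Fin m), ↑D ⊆ activeIdx A b x →
    -(Q.mulVec x + c) ∈ coneOf A D → n ≤ D.card

/-- The submatrix `A_D` of `A` formed by the rows indexed by `D`. -/
def subA (A : Matrix (Fin m) (Fin n) ℝ) (D : Finset (Fin m)) : Matrix D (Fin n) ℝ :=
  Matrix.of fun i j => A i.1 j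

/-- The KKT matrix `M_D = [[Q, A_Dᵀ],[A_D, 0]]`. -/
noncomputable def MD (Q : Matrix (Fin n) (Fin n) ℝ) (A : Matrix (Fin m) (Fin n) ℝ)
    (D : Finset (Fin m)) : Matrix (Fin n ⊕ D) (Fin n ⊕ D) ℝ :=
  Matrix.fromBlocks Q (subA A D)ᵀ (subA A D) 0

/-- The feasible set of the subproblem `P_D`. -/
def FeasD (A : Matrix (Fin m) (Fin n) ℝ) (D : Finset (Fin m)) (β : D → ℝ) :
    Set (Fin n → ℝ) :=
  {x | ∀ i : D, A i.1 ⬝ᵥ x ≤ β i}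

/-- The optimal set mapping `S_D(c,β)` of the subproblem `P_D(c,β)`. -/
noncomputable def argminD (Q : Matrix (Fin n) (Fin n) ℝ) (A : Matrix (Fin m) (Fin n) ℝ)
    (D : Finset (Fin m)) (c : Fin n → ℝ) (β : D → ℝ) : Set (Fin n → ℝ) :=
  {x | x ∈ FeasD A D β ∧ ∀ y ∈ FeasD A D β, obj Q c x ≤ obj Q c y}

/-- Restriction `b_D` of the right-hand side `b` to the indices in `D`. -/
def restr (b : Fin m → ℝ) (D : Finset (Fin m)) : D → ℝ := fun i => b i.1

/-- `nrm` is a norm on `ℝⁿ`. -/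
structure IsNorm (nrm : (Fin n → ℝ) → ℝ) : Prop where
  definite : ∀ x, nrm x = 0 → x = 0
  smul : ∀ (t : ℝ) (x : Fin n → ℝ), nrm (t • x) = |t| * nrm x
  triangle : ∀ x y, nrm (x + y) ≤ nrm x + nrm y

/-- The dual norm `‖c‖_* = sup {|c'y| : ‖y‖ ≤ 1}`. -/
noncomputable def dualNrm (nrm : (Fin n → ℝ) → ℝ) (c : Fin n → ℝ) : ℝ :=
  sSup {r | ∃ y, nrm y ≤ 1 ∧ r = |c ⬝ᵥ y|}

/-- Distance (with respect to the norm `nrm`) from a point to a set, with `d(x,∅) = +∞`. -/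
noncomputable def dSet (nrm : (Fin n → ℝ) → ℝ) (x : Fin n → ℝ) (S : Set (Fin n → ℝ)) :
    ℝ≥0∞ :=
  ⨅ s ∈ S, ENNReal.ofReal (nrm (x - s))

/-- The distance `max {‖c₁-c₂‖_*, ‖β₁-β₂‖_∞}` in a parameter space `ℝⁿ × ℝ^ι`. -/
noncomputable def pDist (nrm : (Fin n → ℝ) → ℝ) {ι : Type} [Fintype ι]
    (p q : (Fin n → ℝ) × (ι → ℝ)) : ℝ :=
  max (dualNrm nrm (p.1 - q.1)) ‖p.2 - q.2‖

/-- The Aubin property of a set-valued mapping `G` at `(pbar, xbar)`, where the parameter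
space carries the distance `pd` and `ℝⁿ` the norm `nrm`. -/
def AubinAt {P : Type*} [TopologicalSpace P] (nrm : (Fin n → ℝ) → ℝ) (pd : P → P → ℝ)
    (G : P → Set (Fin n → ℝ)) (pbar : P) (xbar : Fin n → ℝ) : Prop :=
  ∃ κ : ℝ, 0 ≤ κ ∧ ∃ V ∈ 𝓝 pbar, ∃ U ∈ 𝓝 xbar,
    ∀ p1 ∈ V, ∀ p2 ∈ V, ∀ x2 ∈ G p2 ∩ U,
      dSet nrm x2 (G p1) ≤ ENNReal.ofReal (κ * pd p2 p1)

/-- The Lipschitz modulus of `G` at `(pbar, xbar)`: the infimum in `[0,+∞]` of all Lipschitz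
constants `κ` in the definition of the Aubin property (`+∞` if the Aubin property fails). -/
noncomputable def lipMod {P : Type*} [TopologicalSpace P] (nrm : (Fin n → ℝ) → ℝ)
    (pd : P → P → ℝ) (G : P → Set (Fin n → ℝ)) (pbar : P) (xbar : Fin n → ℝ) : ℝ≥0∞ :=
  ⨅ κ ∈ {κ : ℝ | 0 ≤ κ ∧ ∃ V ∈ 𝓝 pbar, ∃ U ∈ 𝓝 xbar,
    ∀ p1 ∈ V, ∀ p2 ∈ V, ∀ x2 ∈ G p2 ∩ U,
      dSet nrm x2 (G p1) ≤ ENNReal.ofReal (κ * pd p2 p1)}, ENNReal.ofReal κ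

/-- Strong Lipschitz stability of `G` at `pbar`: single-valuedness in a neighborhood of
`pbar` together with Lipschitz continuity there. -/
def StrongLipStable {P : Type*} [TopologicalSpace P] (nrm : (Fin n → ℝ) → ℝ)
    (pd : P → P → ℝ) (G : P → Set (Fin n → ℝ)) (pbar : P) : Prop :=
  ∃ V ∈ 𝓝 pbar, (∀ p ∈ V, ∃! x, x ∈ G p) ∧
    ∃ κ : ℝ, 0 ≤ κ ∧ ∀ p1 ∈ V, ∀ p2 ∈ V, ∀ x1 ∈ G p1, ∀ x2 ∈ G p2,
      nrm (x1 - x2) ≤ κ * pd p1 p2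

/-- The matrix `(I_n | 0_{n×|D|})`. -/
noncomputable def projMat (n : ℕ) {m : ℕ} (D : Finset (Fin m)) :
    Matrix (Fin n) (Fin n ⊕ D) ℝ :=
  Matrix.fromCols 1 0

/-- Operator norm of a matrix from `(ℝ^ι, ‖·‖_∞)` to `(ℝⁿ, nrm)`. -/
noncomputable def opNormInf (nrm : (Fin n → ℝ) → ℝ) {ι : Type} [Fintype ι]
    (B : Matrix (Fin n) ι ℝ) : ℝ :=
  sSup {r | ∃ v : ι → ℝ, ‖v‖ ≤ 1 ∧ r = nrm (B.mulVec v)}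

/-- Operator norm of a matrix from `(ℝⁿ × ℝ^ι, max {‖·‖_*, ‖·‖_∞})` to `(ℝⁿ, nrm)`. -/
noncomputable def opNormMixed (nrm : (Fin n → ℝ) → ℝ) {ι : Type} [Fintype ι]
    (B : Matrix (Fin n) (Fin n ⊕ ι) ℝ) : ℝ :=
  sSup {r | ∃ (α : Fin n → ℝ) (β : ι → ℝ), dualNrm nrm α ≤ 1 ∧ ‖β‖ ≤ 1 ∧
    r = nrm (B.mulVec (Sum.elim α β))}


/-- The matrix `A_Dᵀ (A_D A_Dᵀ)⁻¹`, which is the two-sided inverse of `A_D` whenever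
`A_D` is square and invertible. -/
noncomputable def pinvA (A : Matrix (Fin m) (Fin n) ℝ) (D : Finset (Fin m)) :
    Matrix (Fin n) D ℝ :=
  (subA A D)ᵀ * ((subA A D) * (subA A D)ᵀ)⁻¹

end QPLip

open QPLip


namespace QPLip

variable {n m : ℕ}

namespace IsNorm

variable {nrm : (Fin n → ℝ) → ℝ}

lemma zero' (h : IsNorm nrm) : nrm 0 = 0 := by
  have := h.smul 0 0; simpa using this

lemma nonneg (h : IsNorm nrm) (x : Fin n → ℝ) : 0 ≤ nrm x := by
  have h1 := h.triangle x (-x)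
  have h2 : nrm (-x) = nrm x := by
    have := h.smul (-1) x; simpa using this
  have h0 : nrm (x + -x) = 0 := by
    rw [add_neg_cancel, h.zero']
  linarith

lemma neg' (h : IsNorm nrm) (x : Fin n → ℝ) : nrm (-x) = nrm x := by
  have := h.smul (-1) x; simpa using this

lemma sum_le (h : IsNorm nrm) {ι : Type*} (s : Finset ι) (f : ι → (Fin n → ℝ)) :
    nrm (∑ i ∈ s, f i) ≤ ∑ i ∈ s, nrm (f i) := by
  classical
  induction s using Finset.cons_induction with
  | empty => simp [h.zero']
  | cons a s ha ih =>
      rw [Finset.sum_cons, Finset.sum_cons]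
      exact (h.triangle _ _).trans (by linarith)

/-- Upper equivalence constant. -/
noncomputable def Cup (nrm : (Fin n → ℝ) → ℝ) : ℝ :=
  ∑ j : Fin n, nrm (Pi.single j (1:ℝ))

lemma Cup_nonneg (h : IsNorm nrm) : 0 ≤ Cup nrm :=
  Finset.sum_nonneg fun j _ => h.nonneg _

lemma le_cup (h : IsNorm nrm) (x : Fin n → ℝ) : nrm x ≤ Cup nrm * ‖x‖ := by
  have hx : x = ∑ j, Pi.single j (x j) := (Finset.univ_sum_single x).symm
  calc nrm x = nrm (∑ j, Pi.single j (x j)) := by rw [← hx]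
    _ ≤ ∑ j, nrm (Pi.single j (x j)) := h.sum_le _ _
    _ ≤ ∑ j, nrm (Pi.single j (1:ℝ)) * ‖x‖ := by
        refine Finset.sum_le_sum fun j _ => ?_
        have hs : Pi.single j (x j) = (x j) • (Pi.single j (1:ℝ) : Fin n → ℝ) := by
          funext k
          by_cases hk : k = j <;> simp [Pi.single_apply, hk]
        rw [hs, h.smul]
        have hxj : |x j| ≤ ‖x‖ := by
          simpa [Real.norm_eq_abs] using norm_le_pi_norm x j
        calc |x j| * nrm (Pi.single j (1:ℝ)) ≤ ‖x‖ * nrm (Pi.single j (1:ℝ)) :=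
              mul_le_mul_of_nonneg_right hxj (h.nonneg _)
          _ = nrm (Pi.single j (1:ℝ)) * ‖x‖ := mul_comm _ _
    _ = Cup nrm * ‖x‖ := by rw [Cup, ← Finset.sum_mul]

lemma abs_sub_le (h : IsNorm nrm) (x y : Fin n → ℝ) : |nrm x - nrm y| ≤ nrm (x - y) := by
  have h1 : nrm x ≤ nrm (x - y) + nrm y := by
    have := h.triangle (x - y) y; simpa using this
  have h2 : nrm y ≤ nrm (y - x) + nrm x := by
    have := h.triangle (y - x) x; simpa using this
  have h3 : nrm (y - x) = nrm (x - y) := by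
    have := h.neg' (x - y); simpa using this
  rw [abs_le]; constructor <;> linarith

lemma continuous (h : IsNorm nrm) : Continuous nrm := by
  have : LipschitzWith (Real.toNNReal (Cup nrm)) nrm := by
    refine LipschitzWith.of_dist_le_mul fun x y => ?_
    rw [Real.dist_eq, dist_eq_norm]
    calc |nrm x - nrm y| ≤ nrm (x - y) := h.abs_sub_le x y
      _ ≤ Cup nrm * ‖x - y‖ := h.le_cup _
      _ ≤ (Real.toNNReal (Cup nrm) : ℝ) * ‖x - y‖ := by
          gcongr
          exact Real.le_coe_toNNReal _
  exact this.continuous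

lemma exists_pos_lower (hn : 0 < n) (h : IsNorm nrm) :
    ∃ α : ℝ, 0 < α ∧ ∀ x, α * ‖x‖ ≤ nrm x := by
  have hcomp : IsCompact (Metric.sphere (0 : Fin n → ℝ) 1) := isCompact_sphere 0 1
  have hone : ‖(Pi.single ⟨0, hn⟩ (1:ℝ) : Fin n → ℝ)‖ = 1 := by
    refine le_antisymm ?_ ?_
    · refine (pi_norm_le_iff_of_nonneg zero_le_one).2 fun k => ?_
      by_cases hk : k = ⟨0, hn⟩ <;> simp [Pi.single_apply, hk]
    · have := norm_le_pi_norm (Pi.single ⟨0, hn⟩ (1:ℝ) : Fin n → ℝ) ⟨0, hn⟩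
      simpa using this
  have hne : (Metric.sphere (0 : Fin n → ℝ) 1).Nonempty := by
    exact ⟨Pi.single ⟨0, hn⟩ (1:ℝ), by simp [hone]⟩
  obtain ⟨x0, hx0mem, hx0min⟩ := hcomp.exists_isMinOn hne h.continuous.continuousOn
  have hx0nrm : ‖x0‖ = 1 := by simpa using hx0mem
  have hx0pos : 0 < nrm x0 := by
    rcases (h.nonneg x0).lt_or_eq with hlt | heq
    · exact hlt
    · exfalso
      have : x0 = 0 := h.definite x0 heq.symm
      rw [this] at hx0nrm; simp at hx0nrm
  refine ⟨nrm x0, hx0pos, fun x => ?_⟩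
  by_cases hx : x = 0
  · simp [hx, h.zero']
  · have hnx : (0:ℝ) < ‖x‖ := norm_pos_iff.mpr hx
    have hmem : ‖x‖⁻¹ • x ∈ Metric.sphere (0 : Fin n → ℝ) 1 := by
      simp [norm_smul, abs_of_pos (inv_pos.mpr hnx), inv_mul_cancel₀ hnx.ne']
    have hle := hx0min hmem
    have hsm : nrm (‖x‖⁻¹ • x) = ‖x‖⁻¹ * nrm x := by
      rw [h.smul, abs_of_pos (inv_pos.mpr hnx)]
    simp only [IsMinOn, IsMinFilter] at hle
    have : nrm x0 ≤ ‖x‖⁻¹ * nrm x := by rw [← hsm]; exact hle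
    calc nrm x0 * ‖x‖ ≤ (‖x‖⁻¹ * nrm x) * ‖x‖ := by
          exact mul_le_mul_of_nonneg_right this hnx.le
      _ = nrm x := by field_simp
end IsNorm

end QPLip

namespace QPLip
namespace IsNorm

variable {n : ℕ} {nrm : (Fin n → ℝ) → ℝ}

lemma dual_bddAbove (hn : 0 < n) (h : IsNorm nrm) (c : Fin n → ℝ) :
    BddAbove {r | ∃ y, nrm y ≤ 1 ∧ r = |c ⬝ᵥ y|} := by
  obtain ⟨α, hα, hlow⟩ := h.exists_pos_lower hn
  refine ⟨(∑ i, |c i|) * α⁻¹, ?_⟩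
  rintro r ⟨y, hy, rfl⟩
  have hy' : ‖y‖ ≤ α⁻¹ := by
    have h1 := hlow y
    have h2 : α * ‖y‖ ≤ 1 := h1.trans hy
    calc ‖y‖ = α⁻¹ * (α * ‖y‖) := by field_simp
      _ ≤ α⁻¹ * 1 := by gcongr
      _ = α⁻¹ := mul_one _
  calc |c ⬝ᵥ y| ≤ ∑ i, |c i * y i| := by
        rw [dotProduct]; exact Finset.abs_sum_le_sum_abs _ _
    _ = ∑ i, |c i| * |y i| := by simp [abs_mul]
    _ ≤ ∑ i, |c i| * α⁻¹ := by
        refine Finset.sum_le_sum fun i _ => ?_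
        refine mul_le_mul_of_nonneg_left ?_ (abs_nonneg _)
        exact le_trans (by simpa [Real.norm_eq_abs] using norm_le_pi_norm y i) hy'
    _ = (∑ i, |c i|) * α⁻¹ := by rw [Finset.sum_mul]

lemma dualNrm_nonneg (hn : 0 < n) (h : IsNorm nrm) (c : Fin n → ℝ) :
    0 ≤ dualNrm nrm c := by
  refine le_csSup (h.dual_bddAbove hn c) ⟨0, ?_, ?_⟩
  · rw [h.zero']; exact zero_le_one
  · simp

lemma norm_le_dual (hn : 0 < n) (h : IsNorm nrm) (c : Fin n → ℝ) :
    ‖c‖ ≤ Cup nrm * dualNrm nrm c := by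
  refine (pi_norm_le_iff_of_nonneg
    (mul_nonneg (h.Cup_nonneg) (h.dualNrm_nonneg hn c))).2 fun j => ?_
  set e : Fin n → ℝ := Pi.single j (1:ℝ) with he
  have hepos : 0 < nrm e := by
    rcases (h.nonneg e).lt_or_eq with hlt | heq
    · exact hlt
    · exfalso
      have h0 : e = 0 := h.definite e heq.symm
      have := congrFun h0 j
      simp [he] at this
  have hmem : |c j| / nrm e ∈ {r | ∃ y, nrm y ≤ 1 ∧ r = |c ⬝ᵥ y|} := by
    refine ⟨(nrm e)⁻¹ • e, ?_, ?_⟩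
    · rw [h.smul, abs_of_pos (inv_pos.mpr hepos), inv_mul_cancel₀ hepos.ne']
    · rw [dotProduct_smul]
      have : c ⬝ᵥ e = c j := by simp [he, dotProduct_single]
      rw [this]
      rw [smul_eq_mul, abs_mul, abs_of_pos (inv_pos.mpr hepos)]
      rw [div_eq_inv_mul]
  have hle := le_csSup (h.dual_bddAbove hn c) hmem
  have hecup : nrm e ≤ Cup nrm := by
    refine Finset.single_le_sum (f := fun k => nrm (Pi.single k (1:ℝ)))
      (fun k _ => h.nonneg _) (Finset.mem_univ j)
  calc ‖c j‖ = |c j| := Real.norm_eq_abs _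
    _ = nrm e * (|c j| / nrm e) := by field_simp
    _ ≤ Cup nrm * dualNrm nrm c := by
        refine mul_le_mul hecup hle ?_ (h.Cup_nonneg)
        positivity

lemma dualNrm_neg (c : Fin n → ℝ) : dualNrm nrm (-c) = dualNrm nrm c := by
  unfold dualNrm
  congr 1
  ext r
  simp [neg_dotProduct]

end IsNorm
end QPLip

namespace QPLip

lemma mulVec_norm_le {ι κ : Type} [Fintype ι] [Fintype κ]
    (M : Matrix ι κ ℝ) (w : κ → ℝ) :
    ‖M *ᵥ w‖ ≤ (∑ i, ∑ k, |M i k|) * ‖w‖ := by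
  have hC : 0 ≤ (∑ i, ∑ k, |M i k|) :=
    Finset.sum_nonneg fun i _ => Finset.sum_nonneg fun k _ => abs_nonneg _
  refine (pi_norm_le_iff_of_nonneg (mul_nonneg hC (norm_nonneg _))).2 fun i => ?_
  calc ‖(M *ᵥ w) i‖ = |∑ k, M i k * w k| := by rw [Real.norm_eq_abs]; rfl
    _ ≤ ∑ k, |M i k * w k| := Finset.abs_sum_le_sum_abs _ _
    _ ≤ ∑ k, |M i k| * ‖w‖ := by
        refine Finset.sum_le_sum fun k _ => ?_
        rw [abs_mul]
        exact mul_le_mul_of_nonneg_left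
          (by simpa [Real.norm_eq_abs] using norm_le_pi_norm w k) (abs_nonneg _)
    _ = (∑ k, |M i k|) * ‖w‖ := by rw [Finset.sum_mul]
    _ ≤ (∑ i, ∑ k, |M i k|) * ‖w‖ := by
        refine mul_le_mul_of_nonneg_right ?_ (norm_nonneg _)
        exact Finset.single_le_sum (f := fun i => ∑ k, |M i k|)
          (fun i _ => Finset.sum_nonneg fun k _ => abs_nonneg _) (Finset.mem_univ i)

lemma sum_elim_norm_le {ι κ : Type} [Fintype ι] [Fintype κ]
    (a : ι → ℝ) (b : κ → ℝ) :
    ‖(Sum.elim a b : ι ⊕ κ → ℝ)‖ ≤ max ‖a‖ ‖b‖ := by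
  refine (pi_norm_le_iff_of_nonneg (le_max_of_le_left (norm_nonneg _))).2 fun k => ?_
  cases k with
  | inl i => exact le_max_of_le_left (norm_le_pi_norm a i)
  | inr j => exact le_max_of_le_right (norm_le_pi_norm b j)

end QPLip


namespace QPLip

variable {n m : ℕ}

/-- Core lemma: when the multipliers are positive, the argmin of the subproblem is
the singleton given by the KKT system. -/
lemma argminD_eq_singleton {Q : Matrix (Fin n) (Fin n) ℝ} (hQ : Q.PosSemidef)
    {A : Matrix (Fin m) (Fin n) ℝ} {D : Finset (Fin m)} (hMD : IsUnit (MD Q A D))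
    (c : Fin n → ℝ) (β : D → ℝ)
    (hpos : ∀ i : D, 0 < ((MD Q A D)⁻¹ *ᵥ (Sum.elim (-c) β)) (Sum.inr i)) :
    argminD Q A D c β = {(projMat n D * (MD Q A D)⁻¹) *ᵥ (Sum.elim (-c) β)} := by
  classical
  set N := MD Q A D with hN
  have hdet : IsUnit N.det := (Matrix.isUnit_iff_isUnit_det N).mp hMD
  set z : (Fin n ⊕ D) → ℝ := N⁻¹ *ᵥ (Sum.elim (-c) β) with hzdef
  have hNz : N *ᵥ z = Sum.elim (-c) β := by
    rw [hzdef, Matrix.mulVec_mulVec, Matrix.mul_nonsing_inv _ hdet, Matrix.one_mulVec]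
  set x : Fin n → ℝ := fun j => z (Sum.inl j) with hxdef
  set lam : D → ℝ := fun i => z (Sum.inr i) with hlamdef
  have hz : Sum.elim x lam = z := by funext k; cases k <;> rfl
  rw [← hz, hN, MD, Matrix.fromBlocks_mulVec] at hNz
  rw [Sum.elim_comp_inl, Sum.elim_comp_inr] at hNz
  have h1 : Q *ᵥ x + (subA A D)ᵀ *ᵥ lam = -c := by
    funext j
    have := congrFun hNz (Sum.inl j)
    simpa using this
  have h2 : subA A D *ᵥ x = β := by
    funext i
    have := congrFun hNz (Sum.inr i)
    simpa using this
  -- the candidate point is x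
  have hproj : (projMat n D * N⁻¹) *ᵥ (Sum.elim (-c) β) = x := by
    rw [← Matrix.mulVec_mulVec, ← hzdef, ← hz, projMat,
      Matrix.fromCols_mulVec_sumElim, Matrix.one_mulVec, Matrix.zero_mulVec, add_zero]
  rw [hproj]
  -- symmetry of Q
  have hsym : Qᵀ = Q := hQ.1
  have hsymdot : ∀ u v : Fin n → ℝ, u ⬝ᵥ Q *ᵥ v = v ⬝ᵥ Q *ᵥ u := by
    intro u v
    rw [Matrix.dotProduct_mulVec, ← Matrix.mulVec_transpose, hsym, dotProduct_comm]
  -- the key expansion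
  have key : ∀ y : Fin n → ℝ,
      obj Q c y - obj Q c x
        = (1/2) * ((y - x) ⬝ᵥ Q *ᵥ (y - x)) + (Q *ᵥ x + c) ⬝ᵥ (y - x) := by
    intro y
    have hq := hsymdot x y
    simp only [obj, Matrix.mulVec_sub, dotProduct_sub, sub_dotProduct, add_dotProduct]
    linarith [dotProduct_comm (Q *ᵥ x) y, dotProduct_comm (Q *ᵥ x) x]
  have hlampos : ∀ i : D, 0 < lam i := hpos
  have hxfeas : x ∈ FeasD A D β := by
    intro i
    have hi := congrFun h2 i
    calc A i.1 ⬝ᵥ x = (subA A D *ᵥ x) i := rfl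
      _ ≤ β i := le_of_eq hi
  have e1 : ∀ y : Fin n → ℝ,
      (Q *ᵥ x + c) ⬝ᵥ (y - x) = lam ⬝ᵥ (β - subA A D *ᵥ y) := by
    intro y
    have hQxc : Q *ᵥ x + c = -((subA A D)ᵀ *ᵥ lam) := by
      have h1' := h1
      funext j
      have := congrFun h1' j
      simp only [Pi.add_apply, Pi.neg_apply] at this ⊢
      linarith
    rw [hQxc, neg_dotProduct, Matrix.mulVec_transpose,
      ← Matrix.dotProduct_mulVec, Matrix.mulVec_sub, h2]
    rw [dotProduct_sub, dotProduct_sub, neg_sub]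
  have hge : ∀ y ∈ FeasD A D β, 0 ≤ lam ⬝ᵥ (β - subA A D *ᵥ y) := by
    intro y hy
    rw [dotProduct]
    refine Finset.sum_nonneg fun i _ => mul_nonneg (hlampos i).le ?_
    have hyi : A i.1 ⬝ᵥ y ≤ β i := hy i
    have : (subA A D *ᵥ y) i = A i.1 ⬝ᵥ y := rfl
    simp only [Pi.sub_apply, this]
    linarith
  have hquad : ∀ d : Fin n → ℝ, 0 ≤ d ⬝ᵥ Q *ᵥ d := by
    intro d
    have := hQ.dotProduct_mulVec_nonneg d
    simpa using this
  ext y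
  simp only [Set.mem_singleton_iff]
  constructor
  · rintro ⟨hyfeas, hyopt⟩
    have hle : obj Q c y ≤ obj Q c x := hyopt x hxfeas
    have hk : obj Q c y - obj Q c x
        = (1/2) * ((y - x) ⬝ᵥ Q *ᵥ (y - x)) + lam ⬝ᵥ (β - subA A D *ᵥ y) := by
      rw [key y, e1 y]
    have hσ := hge y hyfeas
    have hq := hquad (y - x)
    have hq0 : (y - x) ⬝ᵥ Q *ᵥ (y - x) = 0 := by linarith
    have hσ0 : lam ⬝ᵥ (β - subA A D *ᵥ y) = 0 := by linarith
    have hQd : Q *ᵥ (y - x) = 0 := by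
      have := (hQ.dotProduct_mulVec_zero_iff (y - x)).1 (by simpa using hq0)
      exact this
    have hAy : subA A D *ᵥ y = β := by
      rw [dotProduct] at hσ0
      have hterm := (Finset.sum_eq_zero_iff_of_nonneg (fun i _ =>
        mul_nonneg (hlampos i).le (by
          have hyi : A i.1 ⬝ᵥ y ≤ β i := hyfeas i
          have : (subA A D *ᵥ y) i = A i.1 ⬝ᵥ y := rfl
          simp only [Pi.sub_apply, this]
          linarith))).1 hσ0
      funext i
      have := hterm i (Finset.mem_univ i)
      rcases mul_eq_zero.1 this with h' | h'
      · exact absurd h' (hlampos i).ne'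
      · have : β i - (subA A D *ᵥ y) i = 0 := by simpa using h'
        linarith [this]
    have hAd : subA A D *ᵥ (y - x) = 0 := by
      rw [Matrix.mulVec_sub, hAy, h2, sub_self]
    have hNw : N *ᵥ (Sum.elim (y - x) (0 : D → ℝ)) = 0 := by
      rw [hN, MD, Matrix.fromBlocks_mulVec]
      rw [Sum.elim_comp_inl, Sum.elim_comp_inr]
      rw [hQd, hAd, Matrix.mulVec_zero, Matrix.mulVec_zero]
      funext k
      cases k <;> simp
    have hw0 : Sum.elim (y - x) (0 : D → ℝ) = 0 := by
      have := congrArg (fun v => N⁻¹ *ᵥ v) hNw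
      simpa [Matrix.mulVec_mulVec, Matrix.nonsing_inv_mul _ hdet,
        Matrix.one_mulVec, Matrix.mulVec_zero] using this
    funext j
    have := congrFun hw0 (Sum.inl j)
    simp only [Sum.elim_inl, Pi.zero_apply, Pi.sub_apply] at this
    linarith
  · rintro rfl
    refine ⟨hxfeas, fun y hy => ?_⟩
    have hk := key y
    have he := e1 y
    have hσ := hge y hy
    have hq := hquad (y - x)
    linarith

end QPLip

/-- for `D ∈ M_{c̄,b̄}(x̄)` with `M_D` nonsingular, near `(c̄, b̄_D)` the
mapping `S_D` is the singleton `{(I_n | 0) M_D⁻¹ (-c; β)}`; in particular `S_D` is strongly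
Lipschitz stable and has the Aubin property at `((c̄,b̄_D),x̄)`. -/
theorem statement4 {n m : ℕ} (hn : 0 < n) (hm : 0 < m)
    (nrm : (Fin n → ℝ) → ℝ) (hnrm : IsNorm nrm)
    (Q : Matrix (Fin n) (Fin n) ℝ) (hQ : Q.PosSemidef)
    (A : Matrix (Fin m) (Fin n) ℝ) (cb : Fin n → ℝ) (bb : Fin m → ℝ) (xb : Fin n → ℝ)
    (hx : xb ∈ argminSet Q A cb bb) (D : Finset (Fin m)) (hD : D ∈ MinKKT Q A cb bb xb)
    (hMD : IsUnit (MD Q A D)) :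
    (∃ V ∈ 𝓝 ((cb, restr bb D) : (Fin n → ℝ) × (D → ℝ)),
      ∀ p ∈ V, argminD Q A D p.1 p.2 =
        {(projMat n D * (MD Q A D)⁻¹).mulVec (Sum.elim (-p.1) p.2)}) ∧
    StrongLipStable nrm (fun p q => pDist nrm p q) (fun p : (Fin n → ℝ) × (D → ℝ) => argminD Q A D p.1 p.2) (cb, restr bb D) ∧
    AubinAt nrm (fun p q => pDist nrm p q) (fun p : (Fin n → ℝ) × (D → ℝ) => argminD Q A D p.1 p.2) (cb, restr bb D) xb := by
  classical
  set N := MD Q A D with hN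
  have hdet : IsUnit N.det := (Matrix.isUnit_iff_isUnit_det N).mp hMD
  -- multipliers at the base point
  obtain ⟨hDact, ⟨lam0, hlam0, hsum⟩, hmin⟩ := hD
  have hpos0 : ∀ i ∈ D, 0 < lam0 i := by
    intro i hi
    rcases (hlam0 i).lt_or_eq with h' | h'
    · exact h'
    · exfalso
      refine hmin (D.erase i) (Finset.erase_ssubset hi) ?_
      refine ⟨lam0, hlam0, ?_⟩
      rw [hsum]
      exact (Finset.sum_erase D (by rw [← h', zero_smul])).symm
  set lamb : D → ℝ := fun i => lam0 i.1 with hlamb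
  -- the KKT system at the base point
  have hNbar : N *ᵥ (Sum.elim xb lamb) = Sum.elim (-cb) (restr bb D) := by
    rw [hN, MD, Matrix.fromBlocks_mulVec, Sum.elim_comp_inl, Sum.elim_comp_inr]
    funext k
    cases k with
    | inl j =>
      simp only [Sum.elim_inl, Pi.add_apply]
      have hAt : ((subA A D)ᵀ *ᵥ lamb) j = ∑ i ∈ D, A i j * lam0 i := by
        calc ((subA A D)ᵀ *ᵥ lamb) j = ∑ i : D, A i.1 j * lam0 i.1 := by
              simp [Matrix.mulVec, dotProduct, Matrix.transpose_apply, subA, lamb]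
          _ = ∑ i ∈ D, A i j * lam0 i := Finset.sum_coe_sort D (fun i => A i j * lam0 i)
      have hsj : -((Q *ᵥ xb) j + cb j) = ∑ i ∈ D, A i j * lam0 i := by
        have := congrFun hsum j
        simp only [Pi.neg_apply, Pi.add_apply, Finset.sum_apply, Pi.smul_apply,
          smul_eq_mul] at this
        rw [this]
        exact Finset.sum_congr rfl fun i _ => mul_comm _ _
      rw [hAt]
      simp only [Pi.neg_apply]
      linarith
    | inr i =>
      simp only [Sum.elim_inr, Pi.add_apply, Matrix.zero_mulVec, Pi.zero_apply, add_zero]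
      have : A i.1 ⬝ᵥ xb = bb i.1 := hDact (Finset.mem_coe.mpr i.2)
      exact this
  have zbar : N⁻¹ *ᵥ (Sum.elim (-cb) (restr bb D)) = Sum.elim xb lamb := by
    rw [← hNbar, Matrix.mulVec_mulVec, Matrix.nonsing_inv_mul _ hdet, Matrix.one_mulVec]
  -- the neighborhood
  set P := ((Fin n → ℝ) × (D → ℝ))
  set V : Set P := {p | ∀ i : D, 0 < (N⁻¹ *ᵥ (Sum.elim (-p.1) p.2)) (Sum.inr i)} with hVdef
  have hcont : ∀ k : Fin n ⊕ D, Continuous fun p : P => (N⁻¹ *ᵥ (Sum.elim (-p.1) p.2)) k := by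
    intro k
    simp only [Matrix.mulVec, dotProduct]
    refine continuous_finset_sum _ fun j _ => ?_
    cases j with
    | inl j =>
      simp only [Sum.elim_inl]
      fun_prop
    | inr i =>
      simp only [Sum.elim_inr]
      exact continuous_const.mul ((continuous_apply i).comp continuous_snd)
  have hVopen : IsOpen V := by
    have hVeq : V = ⋂ i : D, {p : P | 0 < (N⁻¹ *ᵥ (Sum.elim (-p.1) p.2)) (Sum.inr i)} := by
      ext p; simp [hVdef, Set.mem_iInter]
    rw [hVeq]
    exact isOpen_iInter_of_finite fun i => isOpen_lt continuous_const (hcont _)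
  have hmemV : ((cb, restr bb D) : P) ∈ V := by
    intro i
    have := congrFun zbar (Sum.inr i)
    simp only [Sum.elim_inr] at this
    show 0 < (N⁻¹ *ᵥ (Sum.elim (-cb) (restr bb D))) (Sum.inr i)
    rw [this]
    exact hpos0 i.1 i.2
  have hVnhds : V ∈ 𝓝 ((cb, restr bb D) : P) := hVopen.mem_nhds hmemV
  have hsingle : ∀ p ∈ V, argminD Q A D p.1 p.2 =
      {(projMat n D * N⁻¹) *ᵥ (Sum.elim (-p.1) p.2)} := by
    intro p hp
    exact argminD_eq_singleton hQ hMD p.1 p.2 hp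
  -- global Lipschitz bound for the explicit solution map
  set B : Matrix (Fin n) (Fin n ⊕ D) ℝ := projMat n D * N⁻¹ with hB
  set xf : P → (Fin n → ℝ) := fun p => B *ᵥ (Sum.elim (-p.1) p.2) with hxf
  set CB : ℝ := ∑ j, ∑ k, |B j k| with hCB
  have hCB0 : 0 ≤ CB :=
    Finset.sum_nonneg fun j _ => Finset.sum_nonneg fun k _ => abs_nonneg _
  have hCup0 : 0 ≤ IsNorm.Cup nrm := hnrm.Cup_nonneg
  set κ : ℝ := IsNorm.Cup nrm * CB * max (IsNorm.Cup nrm) 1 with hκ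
  have hκ0 : 0 ≤ κ :=
    mul_nonneg (mul_nonneg hCup0 hCB0) (le_trans zero_le_one (le_max_right _ _))
  have hlip : ∀ p q : P, nrm (xf p - xf q) ≤ κ * pDist nrm p q := by
    intro p q
    have hdiff : xf p - xf q = B *ᵥ (Sum.elim (q.1 - p.1) (p.2 - q.2)) := by
      have hv : (Sum.elim (-p.1) p.2 - Sum.elim (-q.1) q.2 : (Fin n ⊕ D) → ℝ)
          = Sum.elim (q.1 - p.1) (p.2 - q.2) := by
        funext k
        cases k <;> simp [Pi.sub_apply] <;> ring
      show B *ᵥ (Sum.elim (-p.1) p.2) - B *ᵥ (Sum.elim (-q.1) q.2) = _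
      rw [← Matrix.mulVec_sub, hv]
    set w : (Fin n ⊕ D) → ℝ := Sum.elim (q.1 - p.1) (p.2 - q.2) with hw
    set d1 : ℝ := dualNrm nrm (p.1 - q.1) with hd1
    set d2 : ℝ := ‖p.2 - q.2‖ with hd2
    have hd1nn : 0 ≤ d1 := hnrm.dualNrm_nonneg hn _
    have hd2nn : 0 ≤ d2 := norm_nonneg _
    have hwle : ‖w‖ ≤ max (IsNorm.Cup nrm) 1 * max d1 d2 := by
      have h1 : ‖q.1 - p.1‖ ≤ IsNorm.Cup nrm * d1 := by
        rw [norm_sub_rev]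
        exact hnrm.norm_le_dual hn (p.1 - q.1)
      have h2 : ‖w‖ ≤ max ‖q.1 - p.1‖ ‖p.2 - q.2‖ := sum_elim_norm_le _ _
      refine h2.trans (max_le ?_ ?_)
      · calc ‖q.1 - p.1‖ ≤ IsNorm.Cup nrm * d1 := h1
          _ ≤ max (IsNorm.Cup nrm) 1 * max d1 d2 :=
            mul_le_mul (le_max_left _ _) (le_max_left _ _) hd1nn
              (le_trans zero_le_one (le_max_right _ _))
      · calc ‖p.2 - q.2‖ = d2 := rfl
          _ = 1 * d2 := (one_mul _).symm
          _ ≤ max (IsNorm.Cup nrm) 1 * max d1 d2 :=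
            mul_le_mul (le_max_right _ _) (le_max_right _ _) hd2nn
              (le_trans zero_le_one (le_max_right _ _))
    have hpd : pDist nrm p q = max d1 d2 := rfl
    calc nrm (xf p - xf q) = nrm (B *ᵥ w) := by rw [hdiff]
      _ ≤ IsNorm.Cup nrm * ‖B *ᵥ w‖ := hnrm.le_cup _
      _ ≤ IsNorm.Cup nrm * (CB * ‖w‖) :=
          mul_le_mul_of_nonneg_left (mulVec_norm_le B w) hCup0
      _ ≤ IsNorm.Cup nrm * (CB * (max (IsNorm.Cup nrm) 1 * max d1 d2)) := by
          refine mul_le_mul_of_nonneg_left (mul_le_mul_of_nonneg_left hwle hCB0) hCup0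
      _ = κ * pDist nrm p q := by rw [hpd, hκ]; ring
  refine ⟨⟨V, hVnhds, hsingle⟩, ?_, ?_⟩
  · -- strong Lipschitz stability
    refine ⟨V, hVnhds, fun p hp => ?_, κ, hκ0, ?_⟩
    · refine ⟨xf p, ?_, fun y hy => ?_⟩
      · show xf p ∈ argminD Q A D p.1 p.2
        rw [hsingle p hp]
        rfl
      · have hy' : y ∈ argminD Q A D p.1 p.2 := hy
        rw [hsingle p hp, Set.mem_singleton_iff] at hy'
        exact hy'
    · intro p1 h1 p2 h2 x1 hx1 x2 hx2
      have hx1' : x1 ∈ argminD Q A D p1.1 p1.2 := hx1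
      have hx2' : x2 ∈ argminD Q A D p2.1 p2.2 := hx2
      rw [hsingle p1 h1, Set.mem_singleton_iff] at hx1'
      rw [hsingle p2 h2, Set.mem_singleton_iff] at hx2'
      rw [hx1', hx2']
      exact hlip p1 p2
  · -- Aubin property
    refine ⟨κ, hκ0, V, hVnhds, Set.univ, Filter.univ_mem, ?_⟩
    intro p1 h1 p2 h2 x2 hx2
    have hx2' : x2 = xf p2 := by
      have hx2a : x2 ∈ argminD Q A D p2.1 p2.2 := hx2.1
      rw [hsingle p2 h2, Set.mem_singleton_iff] at hx2a
      exact hx2a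
    show dSet nrm x2 (argminD Q A D p1.1 p1.2) ≤ _
    rw [hsingle p1 h1]
    have hdle : dSet nrm x2 {xf p1} = ENNReal.ofReal (nrm (x2 - xf p1)) := by
      simp [dSet]
    rw [hdle, hx2']
    exact ENNReal.ofReal_le_ofReal (hlip p2 p1)
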